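/- arXiv:1305.5057 — 3 statements merged into one kernel-verified Lean document; each statement's English description precedes it below -/
import Mathlib

section
/- Let G be a finite p-group and let Θ be a finite group acting on G by automorphisms, with the order of Θ coprime to p. Then the first nonabelian cohomology set H^1(Θ, G) is trivial, i.e., every 1-cocycle a: Θ → G (satisfying a(st) = a(s)·(s·a(t))) is of the form a(s) = g⁻¹·(s·g) for some g ∈ G. -/
lemma abelian_case {G Θ : Type} [CommGroup G] [Fintype G] [Group Θ] [Fintype Θ]
    (hcop : Nat.Coprime (Fintype.card Θ) (Fintype.card G))
    (φ : Θ → G →* G) (a : Θ → G)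
    (ha : ∀ s t, a (s * t) = a s * φ s (a t)) :
    ∃ g : G, ∀ s : Θ, a s = g⁻¹ * φ s g := by
  set m := Fintype.card Θ with hm
  set n := Fintype.card G with hn
  set c : G := ∏ t : Θ, a t with hc
  have hn1 : 1 ≤ n.totient := Nat.totient_pos.2 Fintype.card_pos
  set k : ℕ := m ^ (n.totient - 1) with hk
  have hmk : m * k ≡ 1 [MOD n] := by
    have : m * k = m ^ n.totient := by
      rw [hk, ← pow_succ']
      congr 1
      omega
    rw [this]
    exact Nat.ModEq.pow_totient hcop
  refine ⟨(c ^ k)⁻¹, fun s => ?_⟩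
  have h1 : ∏ t : Θ, a (s * t) = c :=
    Fintype.prod_equiv (Equiv.mulLeft s) _ _ (fun t => rfl)
  have h2 : ∏ t : Θ, a (s * t) = a s ^ m * φ s c := by
    simp only [ha]
    rw [Finset.prod_mul_distrib, Finset.prod_const, map_prod]
    simp [hm]
  have h3 : a s ^ m = c * (φ s c)⁻¹ :=
    eq_mul_inv_iff_mul_eq.2 (h1.symm.trans h2).symm
  have h4 : a s = (a s ^ m) ^ k := by
    rw [← pow_mul]
    nth_rewrite 1 [← pow_one (a s)]
    rw [pow_eq_pow_iff_modEq]
    exact (hmk.symm).of_dvd (orderOf_dvd_card)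
  rw [h4, h3, mul_pow, inv_pow, ← map_pow]
  rw [inv_inv, map_inv, mul_comm]

lemma key {p : ℕ} [Fact p.Prime] {Θ : Type} [Group Θ] [Fintype Θ]
    (hcop : Nat.Coprime (Fintype.card Θ) p) :
    ∀ (N : ℕ) (G : Type) [Group G] [Fintype G], Fintype.card G ≤ N →
      IsPGroup p G →
      ∀ (φ : Θ → G →* G), (∀ s t x, φ (s * t) x = φ s (φ t x)) →
        (∀ x : G, φ 1 x = x) →
        ∀ (a : Θ → G), (∀ s t, a (s * t) = a s * φ s (a t)) →
          ∃ g : G, ∀ s : Θ, a s = g⁻¹ * φ s g := by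
  intro N
  induction N with
  | zero =>
    intro G _ _ hcard
    have := Fintype.card_pos (α := G)
    omega
  | succ N ih =>
    intro G _ _ hcard hG φ hφmul hφone a ha
    by_cases hss : Subsingleton G
    · exact ⟨1, fun s => Subsingleton.elim _ _⟩
    have : Nontrivial G := not_subsingleton_iff_nontrivial.mp hss
    set Z := Subgroup.center G with hZ
    have hZnt : Nontrivial Z := hG.center_nontrivial
    have instZ : Fintype Z := Fintype.ofFinite _
    -- each φ s is "invertible" via φ s⁻¹
    have hinv : ∀ (s : Θ) (x : G), φ s (φ s⁻¹ x) = x := by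
      intro s x
      rw [← hφmul, mul_inv_cancel, hφone]
    -- center is preserved
    have hcen : ∀ (s : Θ), ∀ x ∈ Z, φ s x ∈ Z := by
      intro s x hx
      rw [hZ, Subgroup.mem_center_iff]
      intro g
      have hx' := (Subgroup.mem_center_iff.mp hx) (φ s⁻¹ g)
      calc g * φ s x = φ s (φ s⁻¹ g) * φ s x := by rw [hinv]
        _ = φ s (φ s⁻¹ g * x) := by rw [map_mul]
        _ = φ s (x * φ s⁻¹ g) := by rw [hx']
        _ = φ s x * g := by rw [map_mul, hinv]
    have hle : ∀ s : Θ, Z ≤ Z.comap (φ s) := fun s x hx => hcen s x hx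
    -- quotient setup
    have hfq : Finite (G ⧸ Z) := Quotient.finite _
    have instq : Fintype (G ⧸ Z) := Fintype.ofFinite _
    have hcardlt : Fintype.card (G ⧸ Z) < Fintype.card G := by
      have h1 : Nat.card G = Nat.card (G ⧸ Z) * Nat.card Z :=
        Subgroup.card_eq_card_quotient_mul_card_subgroup Z
    
      have h2 : 1 < Nat.card Z := Finite.one_lt_card
      have h3 : 0 < Nat.card (G ⧸ Z) := Nat.card_pos
      simp only [Nat.card_eq_fintype_card] at h1 h2 h3
      nlinarith
    set φ' : Θ → (G ⧸ Z) →* (G ⧸ Z) := fun s => QuotientGroup.map Z Z (φ s) (hle s)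
      with hφ'
    have hφ'mk : ∀ (s : Θ) (x : G), φ' s ↑x = ↑(φ s x) := fun s x =>
      QuotientGroup.map_mk Z Z (φ s) (hle s) x
    have hφ'mul : ∀ (s t : Θ) (q : G ⧸ Z), φ' (s * t) q = φ' s (φ' t q) := by
      intro s t q
      obtain ⟨x, rfl⟩ := QuotientGroup.mk_surjective q
      rw [hφ'mk, hφ'mk, hφ'mk, hφmul]
    have hφ'one : ∀ q : G ⧸ Z, φ' 1 q = q := by
      intro q
      obtain ⟨x, rfl⟩ := QuotientGroup.mk_surjective q
      rw [hφ'mk, hφone]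
    have ha' : ∀ s t : Θ, ((a (s * t) : G) : G ⧸ Z) = ↑(a s) * φ' s ↑(a t) := by
      intro s t
      rw [hφ'mk, ha, QuotientGroup.mk_mul]
    obtain ⟨gq, hgq⟩ := ih (G ⧸ Z) (by omega) (hG.to_quotient Z) φ' hφ'mul hφ'one
      (fun s => ↑(a s)) ha'
    obtain ⟨g0, rfl⟩ := QuotientGroup.mk_surjective gq
    -- the twisted cocycle lands in the center
    set a' : Θ → G := fun s => g0 * a s * (φ s g0)⁻¹ with ha'def
    have hmem : ∀ s : Θ, a' s ∈ Z := by
      intro s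
      have h := hgq s
      rw [hφ'mk] at h
      have : ((a' s : G) : G ⧸ Z) = 1 := by
        rw [ha'def]
        simp only [QuotientGroup.mk_mul, QuotientGroup.mk_inv, h]
        group
      exact (QuotientGroup.eq_one_iff _).mp this
    have ha'cocycle : ∀ s t : Θ, a' (s * t) = a' s * φ s (a' t) := by
      intro s t
      simp only [ha'def, ha, hφmul, map_mul, map_inv]
      group
    -- move to the center subgroup
    set ψ : Θ → Z →* Z := fun s => ((φ s).domRestrict Z).codRestrict Z
      (fun x => hcen s x x.2) with hψ
    set b : Θ → Z := fun s => ⟨a' s, hmem s⟩ with hb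
    have hbco : ∀ s t : Θ, b (s * t) = b s * ψ s (b t) := by
      intro s t
      ext
      exact ha'cocycle s t
    have hcopZ : Nat.Coprime (Fintype.card Θ) (Fintype.card Z) := by
      obtain ⟨n, hn⟩ := IsPGroup.iff_card.mp (hG.to_subgroup Z)
      have hZcard : Fintype.card Z = p ^ n := by
        rw [← Nat.card_eq_fintype_card, hn]
      rw [hZcard]
      exact Nat.Coprime.pow_right n hcop
    open IsMulCommutative in
    obtain ⟨z, hz⟩ := abelian_case hcopZ ψ b hbco
    refine ⟨↑z * g0, fun s => ?_⟩
    have hz' : a' s = (↑z)⁻¹ * φ s ↑z := by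
      have := congrArg (Subtype.val) (hz s)
      exact this
    rw [map_mul, mul_inv_rev]
    rw [ha'def] at hz'
    have : a s = g0⁻¹ * ((↑z)⁻¹ * φ s ↑z) * φ s g0 := by
      rw [← hz']
      group
    rw [this]
    group

/-- If `G` is a finite `p`-group and `Θ` a finite group of order coprime to `p`
acting on `G` by automorphisms, then `H¹(Θ, G)` is trivial: every 1-cocycle is a
coboundary. -/
theorem stmt0 {p : ℕ} [Fact p.Prime] (G Θ : Type) [Group G] [Fintype G]
    [Group Θ] [Fintype Θ]
    (hG : IsPGroup p G) (hcop : Nat.Coprime (Fintype.card Θ) p)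
    (φ : Θ →* MulAut G) (a : Θ → G)
    (ha : ∀ s t : Θ, a (s * t) = a s * φ s (a t)) :
    ∃ g : G, ∀ s : Θ, a s = g⁻¹ * φ s g := by
  have := key hcop (Fintype.card G) G le_rfl hG
    (fun s => (φ s).toMonoidHom)
    (fun s t x => by simp [map_mul φ s t, MulAut.mul_apply])
    (fun x => by simp) a ha
  exact this
end

section
/- Let G be a profinite group (compact topological group that is an inverse limit of finite groups) and Θ a finite group acting on G by continuous automorphisms. Suppose that for every open normal Θ-stable subgroup N of G, the cohomology set H^1(Θ, G/N) is trivial. Then H^1(Θ, G) is trivial: every continuous 1-cocycle a: Θ → G is a coboundary. -/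
/-- Let `G` be a profinite group (compact, totally disconnected topological group)
and `Θ` a finite group acting on `G` by continuous automorphisms. If for every open
normal `Θ`-stable subgroup `N ⊴ G` the cohomology set `H¹(Θ, G/N)` is trivial
(i.e. every cocycle of `Θ` with values in `G` becomes a coboundary modulo `N`),
then `H¹(Θ, G)` is trivial: every 1-cocycle `a : Θ → G` is a coboundary. -/
theorem stmt2 (G Θ : Type) [Group G] [TopologicalSpace G] [IsTopologicalGroup G]
    [CompactSpace G] [TotallyDisconnectedSpace G]
    [Group Θ] [Finite Θ]
    (φ : Θ →* MulAut G) (hφ : ∀ s : Θ, Continuous (φ s))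
    (hH1 : ∀ N : Subgroup G, N.Normal → IsOpen (N : Set G) →
      (∀ s : Θ, ∀ n ∈ N, φ s n ∈ N) →
      ∀ a : Θ → G, (∀ s t : Θ, a (s * t) = a s * φ s (a t)) →
        ∃ g : G, ∀ s : Θ, g * a s * (φ s g)⁻¹ ∈ N)
    (a : Θ → G) (ha : ∀ s t : Θ, a (s * t) = a s * φ s (a t)) :
    ∃ g : G, ∀ s : Θ, a s = g⁻¹ * φ s g := by
  classical
  -- index type: open normal Θ-stable subgroups
  let P : Subgroup G → Prop := fun N =>
    N.Normal ∧ IsOpen (N : Set G) ∧ (∀ s : Θ, ∀ n ∈ N, φ s n ∈ N)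
  let ι := {N : Subgroup G // P N}
  have hιne : Nonempty ι := ⟨⟨⊤, inferInstance, isOpen_univ, fun _ _ _ => trivial⟩⟩
  let K : ι → Set G := fun N => {g | ∀ s : Θ, g * a s * (φ s g)⁻¹ ∈ N.1}
  have hKclosed : ∀ N : ι, IsClosed (K N) := by
    intro N
    have : K N = ⋂ s : Θ, (fun g => g * a s * (φ s g)⁻¹) ⁻¹' (N.1 : Set G) := by
      ext g; simp [K, Set.mem_iInter]
    rw [this]
    refine isClosed_iInter fun s => IsClosed.preimage ?_ ?_
    · exact (continuous_id.mul continuous_const).mul ((hφ s).inv)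
    · exact (OpenSubgroup.isClosed ⟨N.1, N.2.2.1⟩ : IsClosed (N.1 : Set G))
  have hKne : ∀ N : ι, (K N).Nonempty := by
    intro N
    obtain ⟨g, hg⟩ := hH1 N.1 N.2.1 N.2.2.1 N.2.2.2 a ha
    exact ⟨g, hg⟩
  have hdir : Directed (· ⊇ ·) K := by
    intro N M
    have hP : P (N.1 ⊓ M.1) := by
      refine ⟨?_, ?_, ?_⟩
      · constructor
        intro n hn g
        exact ⟨N.2.1.conj_mem n hn.1 g, M.2.1.conj_mem n hn.2 g⟩
      · exact N.2.2.1.inter M.2.2.1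
      · intro s n hn
        exact ⟨N.2.2.2 s n hn.1, M.2.2.2 s n hn.2⟩
    refine ⟨⟨N.1 ⊓ M.1, hP⟩, ?_, ?_⟩
    · intro g hg s; exact (hg s).1
    · intro g hg s; exact (hg s).2
  obtain ⟨g, hg⟩ := IsCompact.nonempty_iInter_of_directed_nonempty_isCompact_isClosed
    K hdir hKne (fun N => (hKclosed N).isCompact) hKclosed
  refine ⟨g, fun s => ?_⟩
  have hx1 : g * a s * (φ s g)⁻¹ = 1 := by
    by_contra hx
    -- find an open normal subgroup avoiding x
    have h1 : (1 : G) ∈ ({g * a s * (φ s g)⁻¹}ᶜ : Set G) := by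
      simpa using fun h => hx h.symm
    obtain ⟨W, hWclopen, h1W, hWsub⟩ :=
      compact_exists_isClopen_in_isOpen (isClosed_singleton.isOpen_compl) h1
    obtain ⟨H, hH⟩ :=
      IsTopologicalGroup.exist_openNormalSubgroup_sub_clopen_nhds_of_one hWclopen h1W
    -- stabilize H under Θ
    set N' : Subgroup G := ⨅ t : Θ, (H.toSubgroup).comap (φ t : G →* G) with hN'
    have hmemN' : ∀ x : G, x ∈ N' ↔ ∀ t : Θ, φ t x ∈ H.toSubgroup := by
      intro x; simp [hN', Subgroup.mem_iInf, Subgroup.mem_comap]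
    have hN'P : P N' := by
      refine ⟨?_, ?_, ?_⟩
      · constructor
        intro n hn h
        rw [hmemN'] at hn ⊢
        intro t
        have := H.isNormal'.conj_mem _ (hn t) (φ t h)
        simpa [map_mul] using this
      · have : (N' : Set G) = ⋂ t : Θ, (φ t : G → G) ⁻¹' (H.toSubgroup : Set G) := by
          ext x
          simp [hmemN', Set.mem_iInter, Set.mem_preimage, SetLike.mem_coe]
        rw [this]
        exact isOpen_iInter_of_finite fun t => H.isOpen'.preimage (hφ t)
      · intro s n hn
        rw [hmemN'] at hn ⊢
        intro t
        have : φ t (φ s n) = φ (t * s) n := by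
          simp [map_mul, MulAut.mul_apply]
        rw [this]
        exact hn (t * s)
    have hN'leH : N' ≤ H.toSubgroup := by
      intro x hx'
      have := (hmemN' x).1 hx' 1
      simpa using this
    have hgK : g ∈ K ⟨N', hN'P⟩ := Set.mem_iInter.1 hg ⟨N', hN'P⟩
    have : g * a s * (φ s g)⁻¹ ∈ W := hH (hN'leH (hgK s))
    exact (hWsub this) rfl
  have hga : g * a s = φ s g := by
    have := mul_inv_eq_one.mp hx1
    exact this
  rw [eq_inv_mul_iff_mul_eq]
  exact hga
end

section
/- Let Γ = ℤ with the ℤ/2ℤ-action by negation (so the fixed subgroup Γ^Θ is trivial). Let M be the F₂-vector space {(x,y,z) ∈ F₂³ : x + y + z = 0}, with the generator of Γ acting by cyclic permutation of coordinates. Then the group cohomology H^n(ℤ, M) vanishes for all n ≥ 0, while H^0(Γ^Θ, M) = M has F₂-dimension 2; in particular dim H^0(ℤ, M) < dim H^0(Γ^Θ, M). -/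
/-- The 2-dimensional `𝔽₂`-subspace `M = {(x,y,z) ∈ 𝔽₂³ : x + y + z = 0}`. -/
def Msub : Submodule (ZMod 2) (Fin 3 → ZMod 2) where
  carrier := {v | v 0 + v 1 + v 2 = 0}
  add_mem' := by
    intro a b ha hb
    simp only [Set.mem_setOf_eq, Pi.add_apply] at *
    linear_combination ha + hb
  zero_mem' := by simp
  smul_mem' := by
    intro c v hv
    simp only [Set.mem_setOf_eq, Pi.smul_apply] at *
    rw [← smul_add, ← smul_add, hv, smul_zero]

/-- The cyclic permutation `(x,y,z) ↦ (z,x,y)` as a linear endomorphism of `Msub`. -/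
def tmap : Msub →ₗ[ZMod 2] Msub where
  toFun v := ⟨fun i => v.1 (i + 2), by
    have h := v.2
    simp only [Msub, Submodule.mem_mk, AddSubmonoid.mem_mk, AddSubsemigroup.mem_mk,
      Set.mem_setOf_eq] at *
    show v.1 (0 + 2) + v.1 (1 + 2) + v.1 (2 + 2) = 0
    rw [show ((0 : Fin 3) + 2) = 2 from rfl, show ((1 : Fin 3) + 2) = 0 from rfl,
      show ((2 : Fin 3) + 2) = 1 from rfl]
    linear_combination h⟩
  map_add' := by intro a b; ext i; rfl
  map_smul' := by intro c a; ext i; rfl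


lemma ker_bot : LinearMap.ker (tmap - LinearMap.id) = ⊥ := by
  rw [LinearMap.ker_eq_bot']
  intro v hv
  have h' : tmap v - v = 0 := by simpa using hv
  have h : tmap v = v := sub_eq_zero.mp h'
  have h2 : ∀ i, v.1 (i + 2) = v.1 i := fun i => congrFun (congrArg Subtype.val h) i
  have ha : v.1 2 = v.1 0 := h2 0
  have hb : v.1 0 = v.1 1 := h2 1
  have hsum : v.1 0 + v.1 1 + v.1 2 = 0 := v.2
  have h0 : v.1 0 = 0 := by linear_combination hsum + hb + ha - CharTwo.add_self_eq_zero (v.1 2)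
  ext i
  fin_cases i
  · exact h0
  · rw [show ((⟨1,by omega⟩ : Fin 3)) = 1 from rfl]; exact hb ▸ h0
  · rw [show ((⟨2,by omega⟩ : Fin 3)) = 2 from rfl]; rw [ha]; exact h0

def sumMap : (Fin 3 → ZMod 2) →ₗ[ZMod 2] ZMod 2 where
  toFun v := v 0 + v 1 + v 2
  map_add' a b := by simp; ring
  map_smul' c v := by simp; ring

lemma msub_eq_ker : Msub = LinearMap.ker sumMap := rfl

lemma finrank_msub : Module.finrank (ZMod 2) Msub = 2 := by
  have hsurj : Function.Surjective sumMap := by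
    intro x
    exact ⟨fun _ => x, by show x + x + x = x; linear_combination CharTwo.add_self_eq_zero x⟩
  have := LinearMap.finrank_range_add_finrank_ker sumMap
  rw [LinearMap.range_eq_top.mpr hsurj] at this
  simp [Module.finrank_fin_fun] at this
  rw [msub_eq_ker]
  omega

/-- For `Γ = ℤ` acting on `M = {(x,y,z) ∈ 𝔽₂³ : x+y+z=0}` through the cyclic
permutation `t`, the group cohomology `Hⁿ(ℤ, M)` vanishes for all `n ≥ 0`
(`H⁰ = ker(t−1) = 0`, `H¹ = coker(t−1) = 0`, and `Hⁿ = 0` for `n ≥ 2` by definition),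
while `H⁰(Γ^Θ, M) = M` has `𝔽₂`-dimension `2`; in particular
`dim H⁰(ℤ, M) < dim H⁰(Γ^Θ, M)`. -/
theorem stmt4 :
    LinearMap.ker (tmap - LinearMap.id) = ⊥ ∧
    LinearMap.range (tmap - LinearMap.id) = ⊤ ∧
    Module.finrank (ZMod 2) Msub = 2 ∧
    Module.finrank (ZMod 2) (LinearMap.ker (tmap - LinearMap.id)) <
      Module.finrank (ZMod 2) Msub := by
  refine ⟨ker_bot, ?_, finrank_msub, ?_⟩
  · rw [LinearMap.range_eq_top]
    exact (LinearMap.injective_iff_surjective).mp (LinearMap.ker_eq_bot.mp ker_bot)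
  · rw [ker_bot, finrank_msub, finrank_bot]
    norm_num
end
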